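/- Let u be a real random variable on a probability space with P(u = 0) = 0, and let F(s) := P(u ≤ s) denote its cumulative distribution function. Then for every τ ∈ (0,1) and every δ ∈ ℝ, the random variable ρ_τ(u − δ) − ρ_τ(u) is bounded (by |δ|) and E[ρ_τ(u − δ) − ρ_τ(u)] = ∫₀^δ (F(s) − τ) ds, where the integral is the signed (oriented) integral from 0 to δ. -/

import Mathlib

open MeasureTheory intervalIntegral

/-- The quantile regression check function `ρ_τ(u) = u (τ - 1{u < 0})`. -/
noncomputable def rho (τ u : ℝ) : ℝ := u * (τ - if u < 0 then 1 else 0)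

lemma step_mono (a : ℝ) : Monotone (fun s => if a ≤ s then (1:ℝ) else 0) := by
  intro x y hxy
  by_cases h1 : a ≤ x
  · simp [h1, h1.trans hxy]
  · by_cases h2 : a ≤ y <;> simp [h1, h2]

lemma step_ii (a c d : ℝ) : IntervalIntegrable (fun s => if a ≤ s then (1:ℝ) else 0) volume c d :=
  (step_mono a).intervalIntegrable

lemma ae_ne' (a : ℝ) : ∀ᵐ s : ℝ, s ≠ a := by
  rw [ae_iff]
  simpa using Real.volume_singleton (a := a)

lemma int_step_zero {a c d : ℝ} (hda : d ≤ a) (hcd : c ≤ d) :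
    ∫ s in c..d, (if a ≤ s then (1:ℝ) else 0) = 0 := by
  have h : ∫ s in c..d, (if a ≤ s then (1:ℝ) else 0) = ∫ s in c..d, (0:ℝ) := by
    apply intervalIntegral.integral_congr_ae
    filter_upwards [ae_ne' a] with s hs hmem
    rw [Set.uIoc_of_le hcd] at hmem
    have : s < a := lt_of_le_of_ne (hmem.2.trans hda) hs
    simp [not_le.mpr this]
  simp [h]

lemma int_step_one {a c d : ℝ} (hac : a ≤ c) (hcd : c ≤ d) :
    ∫ s in c..d, (if a ≤ s then (1:ℝ) else 0) = d - c := by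
  have h : ∫ s in c..d, (if a ≤ s then (1:ℝ) else 0) = ∫ s in c..d, (1:ℝ) := by
    apply intervalIntegral.integral_congr
    intro s hs
    rw [Set.uIcc_of_le hcd] at hs
    simp [hac.trans hs.1]
  rw [h]; simp

lemma int_step_le {a c d : ℝ} (hcd : c ≤ d) :
    ∫ s in c..d, (if a ≤ s then (1:ℝ) else 0) = max d a - max c a := by
  rcases le_total a c with hac | hca
  · rw [int_step_one hac hcd, max_eq_left (hac.trans hcd), max_eq_left hac]
  · rcases le_total d a with hda | had
    · rw [int_step_zero hda hcd, max_eq_right hda, max_eq_right hca]; ring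
    · rw [← intervalIntegral.integral_add_adjacent_intervals (step_ii a c a) (step_ii a a d),
        int_step_zero le_rfl hca, int_step_one le_rfl had,
        max_eq_left had, max_eq_right hca]
      ring

lemma int_step (a δ : ℝ) :
    ∫ s in (0:ℝ)..δ, (if a ≤ s then (1:ℝ) else 0) = max δ a - max 0 a := by
  rcases le_total (0:ℝ) δ with h | h
  · exact int_step_le h
  · rw [intervalIntegral.integral_symm δ 0, int_step_le h]; ring

lemma knight_closed (τ a δ : ℝ) :
    rho τ (a - δ) - rho τ a = max δ a - max 0 a - δ * τ := by
  simp only [rho, max_def]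
  split_ifs <;> (try ring) <;> linarith

lemma knight_pointwise (τ a δ : ℝ) :
    rho τ (a - δ) - rho τ a = ∫ s in (0:ℝ)..δ, ((if a ≤ s then (1:ℝ) else 0) - τ) := by
  rw [intervalIntegral.integral_sub (step_ii a 0 δ) intervalIntegrable_const,
    int_step, intervalIntegral.integral_const, knight_closed]
  simp only [smul_eq_mul]
  ring

lemma knight_bound {τ : ℝ} (hτ0 : 0 < τ) (hτ1 : τ < 1) (a δ : ℝ) :
    |rho τ (a - δ) - rho τ a| ≤ |δ| := by
  rw [knight_closed]
  have hub : max δ a - max 0 a ≤ max 0 δ := by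
    simp only [max_def]; split_ifs <;> linarith
  have hlb : min 0 δ ≤ max δ a - max 0 a := by
    simp only [max_def, min_def]; split_ifs <;> linarith
  rcases le_total (0:ℝ) δ with h | h
  · rw [max_eq_right h] at hub; rw [min_eq_left h] at hlb
    rw [abs_of_nonneg h, abs_le]; constructor <;> nlinarith
  · rw [max_eq_left h] at hub; rw [min_eq_right h] at hlb
    rw [abs_of_nonpos h, abs_le]; constructor <;> nlinarith

lemma swap_helper {Ω : Type*} [MeasurableSpace Ω] (P : Measure Ω) [IsProbabilityMeasure P]
    (u : Ω → ℝ) (hu : Measurable u) (τ c d : ℝ) :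
    ∫ ω, (∫ s in Set.Ioc c d, ((if u ω ≤ s then (1:ℝ) else 0) - τ)) ∂P
      = ∫ s in Set.Ioc c d, ((P {ω | u ω ≤ s}).toReal - τ) := by
  haveI : IsFiniteMeasure (volume.restrict (Set.Ioc c d)) := ⟨by
    rw [Measure.restrict_apply_univ]
    exact Real.volume_Ioc ▸ ENNReal.ofReal_lt_top⟩
  have hmeas : Measurable (Function.uncurry fun (ω : Ω) (s : ℝ) =>
      ((if u ω ≤ s then (1:ℝ) else 0) - τ)) := by
    apply Measurable.sub _ measurable_const
    exact Measurable.ite (measurableSet_le (hu.comp measurable_fst) measurable_snd)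
      measurable_const measurable_const
  have hint : Integrable (Function.uncurry fun (ω : Ω) (s : ℝ) =>
      ((if u ω ≤ s then (1:ℝ) else 0) - τ)) (P.prod (volume.restrict (Set.Ioc c d))) := by
    apply (integrable_const (1 + |τ|)).mono' hmeas.aestronglyMeasurable
    filter_upwards with p
    simp only [Function.uncurry]
    refine (norm_sub_le _ _).trans ?_
    have h1 : ‖(if u p.1 ≤ p.2 then (1:ℝ) else 0)‖ ≤ 1 := by split_ifs <;> simp
    have h2 : ‖τ‖ = |τ| := Real.norm_eq_abs τ
    linarith [add_le_add h1 (le_of_eq h2)]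
  rw [MeasureTheory.integral_integral_swap hint]
  apply MeasureTheory.integral_congr_ae
  filter_upwards with s
  have hset : MeasurableSet {ω | u ω ≤ s} := hu measurableSet_Iic
  have hrw : (fun ω => (if u ω ≤ s then (1:ℝ) else 0))
      = Set.indicator {ω | u ω ≤ s} (fun _ => (1:ℝ)) := by
    ext ω
    by_cases h : u ω ≤ s <;> simp [Set.indicator_apply, h]
  have hind : Integrable (fun ω => (if u ω ≤ s then (1:ℝ) else 0)) P := by
    rw [hrw]
    exact (integrable_const (1:ℝ)).indicator hset
  rw [integral_sub hind (integrable_const τ), MeasureTheory.integral_const]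
  have h1 : ∫ ω, (if u ω ≤ s then (1:ℝ) else 0) ∂P = (P {ω | u ω ≤ s}).toReal := by
    rw [hrw, integral_indicator_const _ hset]
    simp
    rfl
  rw [h1]
  simp

theorem expected_knight_expansion
    {Ω : Type*} [MeasurableSpace Ω] (P : Measure Ω) [IsProbabilityMeasure P]
    (u : Ω → ℝ) (hu : Measurable u) (h0 : P {ω | u ω = 0} = 0)
    (τ : ℝ) (hτ : τ ∈ Set.Ioo (0 : ℝ) 1) (δ : ℝ) :
    (∀ ω, |rho τ (u ω - δ) - rho τ (u ω)| ≤ |δ|) ∧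
      ∫ ω, (rho τ (u ω - δ) - rho τ (u ω)) ∂P =
        ∫ s in (0 : ℝ)..δ, ((P {ω | u ω ≤ s}).toReal - τ) := by
  obtain ⟨hτ0, hτ1⟩ := hτ
  refine ⟨fun ω => knight_bound hτ0 hτ1 (u ω) δ, ?_⟩
  have hpt : ∀ ω, rho τ (u ω - δ) - rho τ (u ω)
      = ∫ s in (0:ℝ)..δ, ((if u ω ≤ s then (1:ℝ) else 0) - τ) :=
    fun ω => knight_pointwise τ (u ω) δ
  rcases le_total (0:ℝ) δ with h | h
  · calc ∫ ω, (rho τ (u ω - δ) - rho τ (u ω)) ∂P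
        = ∫ ω, (∫ s in Set.Ioc 0 δ, ((if u ω ≤ s then (1:ℝ) else 0) - τ)) ∂P := by
          congr 1; funext ω; rw [hpt ω, intervalIntegral.integral_of_le h]
      _ = ∫ s in Set.Ioc 0 δ, ((P {ω | u ω ≤ s}).toReal - τ) := swap_helper P u hu τ 0 δ
      _ = ∫ s in (0:ℝ)..δ, ((P {ω | u ω ≤ s}).toReal - τ) :=
          (intervalIntegral.integral_of_le h).symm
  · calc ∫ ω, (rho τ (u ω - δ) - rho τ (u ω)) ∂P
        = ∫ ω, (-∫ s in Set.Ioc δ 0, ((if u ω ≤ s then (1:ℝ) else 0) - τ)) ∂P := by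
          congr 1; funext ω; rw [hpt ω, intervalIntegral.integral_of_ge h]
      _ = -∫ ω, (∫ s in Set.Ioc δ 0, ((if u ω ≤ s then (1:ℝ) else 0) - τ)) ∂P := integral_neg _
      _ = -∫ s in Set.Ioc δ 0, ((P {ω | u ω ≤ s}).toReal - τ) := by
          rw [swap_helper P u hu τ δ 0]
      _ = ∫ s in (0:ℝ)..δ, ((P {ω | u ω ≤ s}).toReal - τ) :=
          (intervalIntegral.integral_of_ge h).symm
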